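/- Consider the piecewise-linear Cauchy problem u'(x) = N(x, u(x_{i-1}))·u(x) + φ(x) on each interval [x_{i-1}, x_i] of a grid x0 < x1 < x2 < ⋯ → ∞, with u(x0) = u0 and u continuous across grid points, where N(x,v) ≤ -α < 0 for all x, v and |φ(x)| ≤ k. Then the solution u exists on [x0, ∞) and satisfies |u(x)| ≤ max(|u0|, k/α) for all x ≥ x0. -/

import Mathlib

open Set MeasureTheory intervalIntegral Filter

noncomputable def odeG (N : ℝ → ℝ → ℝ) (a w t : ℝ) : ℝ := ∫ s in a..t, N s w

noncomputable def odeSol (N : ℝ → ℝ → ℝ) (φ : ℝ → ℝ) (a w t : ℝ) : ℝ :=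
  Real.exp (odeG N a w t) * (w + ∫ s in a..t, Real.exp (-(odeG N a w s)) * φ s)

lemma odeSol_same (N : ℝ → ℝ → ℝ) (φ : ℝ → ℝ) (a w : ℝ) : odeSol N φ a w a = w := by
  simp [odeSol, odeG]

lemma primCont {g : ℝ → ℝ} {a : ℝ} (hg : ContinuousOn g (Ici a)) :
    ContinuousOn (fun t => ∫ s in a..t, g s) (Ici a) := by
  intro t ht
  have hab : a ≤ t + 1 := le_trans ht (by linarith)
  have hint : IntegrableOn g (uIcc a (t + 1)) := by
    rw [uIcc_of_le hab]
    exact (hg.mono Icc_subset_Ici_self).integrableOn_Icc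
  have h1 := continuousOn_primitive_interval (μ := volume) hint
  rw [uIcc_of_le hab] at h1
  have hmem : Icc a (t + 1) ∈ nhdsWithin t (Ici a) := by
    have h2 : Ici a ∩ Iio (t + 1) ∈ nhdsWithin t (Ici a) :=
      inter_mem_nhdsWithin (Ici a) (Iio_mem_nhds (by linarith : t < t + 1))
    exact Filter.mem_of_superset h2 (fun u hu => ⟨hu.1, le_of_lt hu.2⟩)
  exact (h1 t ⟨ht, by linarith⟩).mono_of_mem_nhdsWithin hmem

lemma primDeriv {g : ℝ → ℝ} {a t : ℝ} (hg : ContinuousOn g (Ici a)) (ht : a < t) :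
    HasDerivAt (fun u => ∫ s in a..u, g s) (g t) t := by
  apply integral_hasDerivAt_right
  · apply ContinuousOn.intervalIntegrable
    refine hg.mono ?_
    rw [uIcc_of_le (le_of_lt ht)]
    exact Icc_subset_Ici_self
  · exact (hg.mono Ioi_subset_Ici_self).stronglyMeasurableAtFilter isOpen_Ioi t ht
  · exact hg.continuousAt (Ici_mem_nhds ht)

section Aux

variable {x0 α k : ℝ} {N : ℝ → ℝ → ℝ} {φ : ℝ → ℝ}

lemma odeG_cont (hNcont : ∀ v : ℝ, ContinuousOn (fun t => N t v) (Set.Ici x0))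
    {a : ℝ} (ha : x0 ≤ a) (w : ℝ) : ContinuousOn (odeG N a w) (Ici a) :=
  primCont ((hNcont w).mono (Ici_subset_Ici.2 ha))

lemma odeInner_cont (hNcont : ∀ v : ℝ, ContinuousOn (fun t => N t v) (Set.Ici x0))
    (hφcont : ContinuousOn φ (Set.Ici x0)) {a : ℝ} (ha : x0 ≤ a) (w : ℝ) :
    ContinuousOn (fun s => Real.exp (-(odeG N a w s)) * φ s) (Ici a) :=
  ((Real.continuous_exp.comp_continuousOn (odeG_cont hNcont ha w).neg)).mul
    (hφcont.mono (Ici_subset_Ici.2 ha))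

lemma odeSol_cont (hNcont : ∀ v : ℝ, ContinuousOn (fun t => N t v) (Set.Ici x0))
    (hφcont : ContinuousOn φ (Set.Ici x0)) {a : ℝ} (ha : x0 ≤ a) (w : ℝ) :
    ContinuousOn (odeSol N φ a w) (Ici a) := by
  exact (Real.continuous_exp.comp_continuousOn (odeG_cont hNcont ha w)).mul
    (continuousOn_const.add (primCont (odeInner_cont hNcont hφcont ha w)))

lemma odeSol_deriv (hNcont : ∀ v : ℝ, ContinuousOn (fun t => N t v) (Set.Ici x0))
    (hφcont : ContinuousOn φ (Set.Ici x0)) {a t : ℝ} (ha : x0 ≤ a) (w : ℝ) (ht : a < t) :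
    HasDerivAt (odeSol N φ a w) (N t w * odeSol N φ a w t + φ t) t := by
  have hNw : ContinuousOn (fun s => N s w) (Ici a) := (hNcont w).mono (Ici_subset_Ici.2 ha)
  have hG : HasDerivAt (odeG N a w) (N t w) t := primDeriv hNw ht
  have hF : HasDerivAt (fun u => ∫ s in a..u, Real.exp (-(odeG N a w s)) * φ s)
      (Real.exp (-(odeG N a w t)) * φ t) t :=
    primDeriv (odeInner_cont hNcont hφcont ha w) ht
  have h1 : HasDerivAt (fun u => Real.exp (odeG N a w u))
      (Real.exp (odeG N a w t) * N t w) t := hG.exp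
  have h2 := (hF.const_add w)
  have h3 := h1.mul h2
  have h3' : HasDerivAt (odeSol N φ a w)
      (Real.exp (odeG N a w t) * N t w *
        (w + ∫ s in a..t, Real.exp (-(odeG N a w s)) * φ s) +
       Real.exp (odeG N a w t) * (Real.exp (-(odeG N a w t)) * φ t)) t := h3
  have hexp : Real.exp (odeG N a w t) * Real.exp (-(odeG N a w t)) = 1 := by
    rw [← Real.exp_add]; simp
  convert h3' using 1
  simp only [odeSol]
  linear_combination (-(φ t)) * hexp

lemma odeSol_bound (hα : 0 < α) (hk : 0 ≤ k)
    (hNcont : ∀ v : ℝ, ContinuousOn (fun t => N t v) (Set.Ici x0))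
    (hN : ∀ t ∈ Set.Ici x0, ∀ v : ℝ, N t v ≤ -α)
    (hφcont : ContinuousOn φ (Set.Ici x0))
    (hφ : ∀ t ∈ Set.Ici x0, |φ t| ≤ k)
    {a w t M : ℝ} (ha : x0 ≤ a) (hM : k / α ≤ M) (hw : |w| ≤ M) (ht : a ≤ t) :
    |odeSol N φ a w t| ≤ M := by
  have hIci : Ici a ⊆ Ici x0 := Ici_subset_Ici.2 ha
  have hNw : ContinuousOn (fun s => N s w) (Ici a) := (hNcont w).mono hIci
  have hGc : ContinuousOn (odeG N a w) (Ici a) := odeG_cont hNcont ha w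
  -- integrability of N on subintervals of [a, ∞)
  have hNint : ∀ s b : ℝ, a ≤ s → s ≤ b → IntervalIntegrable (fun r => N r w) volume s b := by
    intro s b hs hb
    apply ContinuousOn.intervalIntegrable
    refine hNw.mono ?_
    rw [uIcc_of_le hb]
    exact fun r hr => le_trans hs hr.1
  -- Step A : G t - G s ≤ -α * (t - s)
  have hA : ∀ s ∈ Icc a t, odeG N a w t - odeG N a w s ≤ -α * (t - s) := by
    intro s hs
    have hdiff : odeG N a w t - odeG N a w s = ∫ r in s..t, N r w :=
      integral_interval_sub_left (hNint a t le_rfl ht) (hNint a s le_rfl hs.1)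
    have hmono : (∫ r in s..t, N r w) ≤ ∫ r in s..t, (-α : ℝ) := by
      apply integral_mono_on hs.2 (hNint s t hs.1 hs.2) intervalIntegrable_const
      intro r hr
      exact hN r (le_trans ha (le_trans hs.1 hr.1)) w
    rw [hdiff]
    calc (∫ r in s..t, N r w) ≤ ∫ r in s..t, (-α : ℝ) := hmono
    _ = -α * (t - s) := by rw [intervalIntegral.integral_const, smul_eq_mul]; ring
  have hGt : Real.exp (odeG N a w t) ≤ Real.exp (-α * (t - a)) := by
    have := hA a ⟨le_rfl, ht⟩
    have h0 : odeG N a w a = 0 := by simp [odeG]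
    apply Real.exp_le_exp.2
    linarith
  -- Step B : bound the inner integral
  have hInner : ContinuousOn (fun s => Real.exp (-(odeG N a w s)) * φ s) (Ici a) :=
    odeInner_cont hNcont hφcont ha w
  have hInnerInt : IntervalIntegrable (fun s => Real.exp (-(odeG N a w s)) * φ s) volume a t := by
    apply ContinuousOn.intervalIntegrable; refine hInner.mono ?_
    rw [uIcc_of_le ht]; exact Icc_subset_Ici_self
  have hBint : IntervalIntegrable (fun s => Real.exp (-(odeG N a w s)) * k) volume a t := by
    apply ContinuousOn.intervalIntegrable
    refine ((Real.continuous_exp.comp_continuousOn (hGc.neg)).mul continuousOn_const).mono ?_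
    rw [uIcc_of_le ht]; exact Icc_subset_Ici_self
  have hB : |∫ s in a..t, Real.exp (-(odeG N a w s)) * φ s| ≤
      ∫ s in a..t, Real.exp (-(odeG N a w s)) * k := by
    calc |∫ s in a..t, Real.exp (-(odeG N a w s)) * φ s|
        ≤ ∫ s in a..t, |Real.exp (-(odeG N a w s)) * φ s| := abs_integral_le_integral_abs ht
      _ ≤ ∫ s in a..t, Real.exp (-(odeG N a w s)) * k := by
          apply integral_mono_on ht hInnerInt.abs hBint
          intro s hs
          rw [abs_mul, abs_of_pos (Real.exp_pos _)]
          exact mul_le_mul_of_nonneg_left (hφ s (le_trans ha hs.1)) (le_of_lt (Real.exp_pos _))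
  -- Step C : exp (G t) * ∫ exp (-G s) k ≤ (k/α) (1 - exp (-α (t - a)))
  have hC : Real.exp (odeG N a w t) * (∫ s in a..t, Real.exp (-(odeG N a w s)) * k) ≤
      k / α * (1 - Real.exp (-α * (t - a))) := by
    have e1 : Real.exp (odeG N a w t) * (∫ s in a..t, Real.exp (-(odeG N a w s)) * k)
        = ∫ s in a..t, Real.exp (odeG N a w t - odeG N a w s) * k := by
      rw [← intervalIntegral.integral_const_mul]
      apply integral_congr
      intro s _
      dsimp only
      rw [← mul_assoc, ← Real.exp_add, sub_eq_add_neg]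
    have hExpInt : IntervalIntegrable (fun s => Real.exp (odeG N a w t - odeG N a w s) * k)
        volume a t := by
      apply ContinuousOn.intervalIntegrable
      refine ((Real.continuous_exp.comp_continuousOn
        (continuousOn_const.sub hGc)).mul continuousOn_const).mono ?_
      rw [uIcc_of_le ht]; exact Icc_subset_Ici_self
    have hExpInt2 : IntervalIntegrable (fun s => Real.exp (-α * (t - s)) * k) volume a t := by
      apply ContinuousOn.intervalIntegrable
      exact (Real.continuous_exp.comp (by continuity)).continuousOn.mul continuousOn_const
    have e2 : (∫ s in a..t, Real.exp (odeG N a w t - odeG N a w s) * k) ≤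
        ∫ s in a..t, Real.exp (-α * (t - s)) * k := by
      apply integral_mono_on ht hExpInt hExpInt2
      intro s hs
      exact mul_le_mul_of_nonneg_right (Real.exp_le_exp.2 (hA s hs)) hk
    have e3 : (∫ s in a..t, Real.exp (-α * (t - s)) * k) =
        k / α * (1 - Real.exp (-α * (t - a))) := by
      have hderiv : ∀ s ∈ uIcc a t, HasDerivAt (fun s => k / α * Real.exp (-α * (t - s)))
          (Real.exp (-α * (t - s)) * k) s := by
        intro s _
        have h1 : HasDerivAt (fun s : ℝ => -α * (t - s)) α s := by
          have := ((hasDerivAt_id s).const_sub t).const_mul (-α)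
          exact this.congr_deriv (by ring)
        have := (h1.exp).const_mul (k / α)
        exact this.congr_deriv (by field_simp)
      rw [integral_eq_sub_of_hasDerivAt hderiv hExpInt2]
      simp
      ring
    calc Real.exp (odeG N a w t) * (∫ s in a..t, Real.exp (-(odeG N a w s)) * k)
        = ∫ s in a..t, Real.exp (odeG N a w t - odeG N a w s) * k := e1
      _ ≤ ∫ s in a..t, Real.exp (-α * (t - s)) * k := e2
      _ = k / α * (1 - Real.exp (-α * (t - a))) := e3
  -- combine
  have hexp_pos : (0:ℝ) < Real.exp (odeG N a w t) := Real.exp_pos _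
  have hexp1 : Real.exp (-α * (t - a)) ≤ 1 := by
    rw [← Real.exp_zero]
    apply Real.exp_le_exp.2
    nlinarith
  have hexp0 : (0:ℝ) < Real.exp (-α * (t - a)) := Real.exp_pos _
  have hfinal : |odeSol N φ a w t| ≤
      Real.exp (-α * (t - a)) * M + k / α * (1 - Real.exp (-α * (t - a))) := by
    unfold odeSol
    rw [abs_mul, abs_of_pos hexp_pos]
    calc Real.exp (odeG N a w t) * |w + ∫ s in a..t, Real.exp (-(odeG N a w s)) * φ s|
        ≤ Real.exp (odeG N a w t) *
          (|w| + |∫ s in a..t, Real.exp (-(odeG N a w s)) * φ s|) := by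
          exact mul_le_mul_of_nonneg_left (abs_add_le _ _) (le_of_lt hexp_pos)
      _ ≤ Real.exp (odeG N a w t) * |w| +
          Real.exp (odeG N a w t) * (∫ s in a..t, Real.exp (-(odeG N a w s)) * k) := by
          rw [mul_add]
          exact add_le_add le_rfl (mul_le_mul_of_nonneg_left hB (le_of_lt hexp_pos))
      _ ≤ Real.exp (-α * (t - a)) * M + k / α * (1 - Real.exp (-α * (t - a))) := by
          refine add_le_add ?_ hC
          have h0 : (0:ℝ) ≤ |w| := abs_nonneg w
          have hwM : |w| ≤ M := hw
          nlinarith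
  have hM0 : 0 ≤ M := le_trans (abs_nonneg w) hw
  nlinarith [hfinal]

end Aux

noncomputable def odeV (N : ℝ → ℝ → ℝ) (φ : ℝ → ℝ) (x : ℕ → ℝ) (u0 : ℝ) : ℕ → ℝ
  | 0 => u0
  | i + 1 => odeSol N φ (x i) (odeV N φ x u0 i) (x (i + 1))

noncomputable def odeIdx (x : ℕ → ℝ) (t : ℝ) : ℕ := sSup {i | x i ≤ t}

theorem stmt_3 (x0 α k u0 : ℝ) (hα : 0 < α) (hk : 0 ≤ k)
    (N : ℝ → ℝ → ℝ) (φ : ℝ → ℝ)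
    (x : ℕ → ℝ) (hx0 : x 0 = x0) (hmono : StrictMono x)
    (hxtop : Filter.Tendsto x Filter.atTop Filter.atTop)
    (hNcont : ∀ v : ℝ, ContinuousOn (fun t => N t v) (Set.Ici x0))
    (hN : ∀ t ∈ Set.Ici x0, ∀ v : ℝ, N t v ≤ -α)
    (hφcont : ContinuousOn φ (Set.Ici x0))
    (hφ : ∀ t ∈ Set.Ici x0, |φ t| ≤ k) :
    ∃ u : ℝ → ℝ, ContinuousOn u (Set.Ici x0) ∧ u x0 = u0 ∧
      (∀ i : ℕ, ∀ t ∈ Set.Ioo (x i) (x (i + 1)),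
        HasDerivAt u (N t (u (x i)) * u t + φ t) t) ∧
      (∀ t ∈ Set.Ici x0, |u t| ≤ max |u0| (k / α)) := by
  set M := max |u0| (k / α) with hMdef
  have hMk : k / α ≤ M := le_max_right _ _
  have hx0le : ∀ i, x0 ≤ x i := fun i => hx0 ▸ hmono.monotone (Nat.zero_le i)
  set v := odeV N φ x u0 with hvdef
  set idx := odeIdx x with hidxdef
  -- basic idx facts
  have hne : ∀ t : ℝ, x0 ≤ t → 0 ∈ {i | x i ≤ t} := fun t ht => by
    simp only [mem_setOf_eq, hx0]; exact ht
  have hbdd : ∀ t : ℝ, BddAbove {i | x i ≤ t} := by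
    intro t
    obtain ⟨n, hn⟩ := (hxtop.eventually_gt_atTop t).exists
    exact ⟨n, fun i hi => le_of_lt (hmono.lt_iff_lt.1 (lt_of_le_of_lt hi hn))⟩
  have hidx1 : ∀ t : ℝ, x0 ≤ t → x (idx t) ≤ t := by
    intro t ht
    exact Nat.sSup_mem ⟨0, hne t ht⟩ (hbdd t)
  have hidx2 : ∀ t : ℝ, x0 ≤ t → t < x (idx t + 1) := by
    intro t ht
    by_contra h
    push_neg at h
    have : idx t + 1 ≤ idx t := le_csSup (hbdd t) h
    omega
  have hidx3 : ∀ (i : ℕ) (t : ℝ), x i ≤ t → t < x (i + 1) → idx t = i := by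
    intro i t h1 h2
    have hle : i ≤ idx t := le_csSup (hbdd t) h1
    have hge : idx t ≤ i := by
      have hxt : x0 ≤ t := le_trans (hx0le i) h1
      have := lt_of_le_of_lt (hidx1 t hxt) h2
      have := hmono.lt_iff_lt.1 this
      omega
    omega
  have hidxgrid : ∀ j : ℕ, idx (x j) = j := fun j =>
    hidx3 j (x j) le_rfl (hmono (Nat.lt_succ_self j))
  set u : ℝ → ℝ := fun t => odeSol N φ (x (idx t)) (v (idx t)) t with hudef
  have hv0 : v 0 = u0 := by rw [hvdef]; rfl
  have hvsucc : ∀ n : ℕ, v (n + 1) = odeSol N φ (x n) (v n) (x (n + 1)) := by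
    intro n; rw [hvdef]; rfl
  have hval : ∀ j : ℕ, u (x j) = v j := by
    intro j
    simp only [hudef, hidxgrid j, odeSol_same]
  have hEq : ∀ i : ℕ, EqOn u (odeSol N φ (x i) (v i)) (Icc (x i) (x (i + 1))) := by
    intro i t ht
    rcases lt_or_eq_of_le ht.2 with h | h
    · simp only [hudef]; rw [hidx3 i t ht.1 h]
    · rw [h, hval (i + 1), hvsucc i]
  have hu0M : |u0| ≤ M := le_max_left _ _
  have hvM : ∀ i : ℕ, |v i| ≤ M := by
    intro i
    induction i with
    | zero => rw [hv0]; exact hu0M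
    | succ n ih =>
      rw [hvsucc n]
      exact odeSol_bound hα hk hNcont hN hφcont hφ (hx0le n) hMk ih
        (le_of_lt (hmono (Nat.lt_succ_self n)))
  refine ⟨u, ?_, ?_, ?_, ?_⟩
  · -- continuity
    intro t ht
    have h1 : x (idx t) ≤ t := hidx1 t ht
    have h2 : t < x (idx t + 1) := hidx2 t ht
    rcases eq_or_lt_of_le h1 with he | hlt
    · -- grid point
      have hRmem : t ∈ Icc (x (idx t)) (x (idx t + 1)) := ⟨h1, le_of_lt h2⟩
      have hR : ContinuousWithinAt u (Icc (x (idx t)) (x (idx t + 1))) t :=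
        (((odeSol_cont hNcont hφcont (hx0le (idx t)) (v (idx t))).mono
          Icc_subset_Ici_self) t hRmem).congr (fun y hy => hEq (idx t) hy) (hEq (idx t) hRmem)
      rcases Nat.eq_zero_or_pos (idx t) with hj | hjpos
      · -- idx t = 0, so t = x0
        rw [hj] at hR he
        have hte : t = x0 := by rw [← he, hx0]
        have hmem : Icc (x 0) (x 1) ∈ nhdsWithin t (Ici x0) := by
          have h3 : Ici x0 ∩ Iio (x 1) ∈ nhdsWithin t (Ici x0) :=
            inter_mem_nhdsWithin (Ici x0) (Iio_mem_nhds (by rw [hj] at h2; exact h2))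
          refine Filter.mem_of_superset h3 (fun y hy => ⟨?_, le_of_lt hy.2⟩)
          rw [hx0]; exact hy.1
        exact hR.mono_of_mem_nhdsWithin hmem
      · -- idx t = m + 1
        obtain ⟨m, hj⟩ : ∃ m, idx t = m + 1 := ⟨idx t - 1, by omega⟩
        rw [hj] at hR he h2
        have hLmem : t ∈ Icc (x m) (x (m + 1)) := ⟨le_trans (le_of_lt (hmono (Nat.lt_succ_self m))) he.le, he.ge⟩
        have hL : ContinuousWithinAt u (Icc (x m) (x (m + 1))) t :=
          (((odeSol_cont hNcont hφcont (hx0le m) (v m)).mono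
            Icc_subset_Ici_self) t hLmem).congr (fun y hy => hEq m hy) (hEq m hLmem)
        have hU := hL.union hR
        rw [Set.Icc_union_Icc_eq_Icc (le_of_lt (hmono (Nat.lt_succ_self m)))
          (le_of_lt (hmono (Nat.lt_succ_self (m + 1))))] at hU
        have hmem : Icc (x m) (x (m + 1 + 1)) ∈ nhdsWithin t (Ici x0) := by
          have hlo : x m < t := by rw [← he]; exact hmono (Nat.lt_succ_self m)
          have h3 : Ici x0 ∩ Ioo (x m) (x (m + 1 + 1)) ∈ nhdsWithin t (Ici x0) :=
            inter_mem_nhdsWithin (Ici x0) (Ioo_mem_nhds hlo h2)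
          exact Filter.mem_of_superset h3 (fun y hy => ⟨le_of_lt hy.2.1, le_of_lt hy.2.2⟩)
        exact hU.mono_of_mem_nhdsWithin hmem
    · -- interior point
      have hev : u =ᶠ[nhds t] odeSol N φ (x (idx t)) (v (idx t)) := by
        filter_upwards [Ioo_mem_nhds hlt h2] with s hs
        exact hEq (idx t) ⟨le_of_lt hs.1, le_of_lt hs.2⟩
      have hsolca : ContinuousAt (odeSol N φ (x (idx t)) (v (idx t))) t :=
        (odeSol_cont hNcont hφcont (hx0le (idx t)) (v (idx t))).continuousAt (Ici_mem_nhds hlt)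
      exact (hsolca.congr hev.symm).continuousWithinAt
  · -- initial value
    rw [← hx0, hval 0, hv0]
  · -- derivative
    intro i t ht
    have hd := odeSol_deriv hNcont hφcont (hx0le i) (v i) ht.1
    have hev : u =ᶠ[nhds t] odeSol N φ (x i) (v i) := by
      filter_upwards [Ioo_mem_nhds ht.1 ht.2] with s hs
      exact hEq i ⟨le_of_lt hs.1, le_of_lt hs.2⟩
    have hut : u t = odeSol N φ (x i) (v i) t := hEq i ⟨le_of_lt ht.1, le_of_lt ht.2⟩
    rw [hval i, hut]
    exact hd.congr_of_eventuallyEq hev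
  · -- bound
    intro t ht
    exact odeSol_bound hα hk hNcont hN hφcont hφ (hx0le (idx t)) hMk (hvM (idx t)) (hidx1 t ht)
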